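/- arXiv:2011.07254 — 2 statements merged into one kernel-verified Lean document; each statement's English description precedes it below -/
import Mathlib

section
/- In the abstract setting (X a σ-finite measure space, A self-adjoint on L²(X), 2<q<∞ fixed, resolvents consistently extended to L^{q′}(X)→L²(X) and L^{q′}(X)→L^q(X)): let m₁,m₂:[0,∞)→ℂ be bounded Borel functions and m := m₁m₂. Let J⊂[0,∞) be an interval and τ₀ ≤ τ₁ ≤ … ≤ τ_{N+1} be a partition of J (so J ⊆ ⋃_{k=0}^N [τ_k,τ_{k+1}]). Assume sup_{0≤k≤N} ‖Π_{[τ_k,τ_{k+1}]}‖_{L^{q′}→L²} < ∞, and for j=1,2 set M_j² := Σ_{k=0}^N sup_{τ∈[τ_k,τ_{k+1}]} |m_j(τ)|² · ‖Π_{[τ_k,τ_{k+1}]}‖²_{L^{q′}→L²} and assume M_j < ∞. Then ‖1_J(A) m_j(A)‖_{L^{q′}→L²} ≤ M_j for j=1,2, and ‖1_J(A) m(A)‖_{L^{q′}→L^q} ≤ M₁M₂. -/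
open MeasureTheory Complex Set

noncomputable section

/-- The Japanese bracket `⟨x⟩ = 2 + |x|`. -/
def jb (x : ℝ) : ℝ := 2 + |x|

/-- The Hölder conjugate exponent `q' = q/(q-1)`. -/
def conjExp (q : ℝ) : ℝ := q / (q - 1)

/-- `σ(q) = min( n(1/2−1/q)−1/2 , ((n−1)/2)(1/2−1/q) )`. -/
def sigmaExp (n : ℕ) (q : ℝ) : ℝ :=
  min ((n : ℝ) * (1 / 2 - 1 / q) - 1 / 2) (((n : ℝ) - 1) / 2 * (1 / 2 - 1 / q))

/-- The admissible range of exponents: `2 ≤ q ≤ 2n/(n−2)` if `n ≥ 3`, `2 ≤ q < ∞` if `n = 2`. -/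
def qRange (n : ℕ) (q : ℝ) : Prop :=
  2 ≤ q ∧ (3 ≤ n → q ≤ 2 * n / ((n : ℝ) - 2))

variable {X : Type*} [MeasurableSpace X]

/-- `OpNormLE μ T p r C` : the operator `T`, defined on `L²(μ)`, satisfies
`‖T f‖_{L^r} ≤ C ‖f‖_{L^p}` for every `f ∈ L²(μ)`; equivalently (by density), `T`
extends from `L² ∩ L^p` to a bounded operator `L^p(μ) → L^r(μ)` of norm at most `C`. -/
def OpNormLE (μ : Measure X) (T : Lp ℂ 2 μ →L[ℂ] Lp ℂ 2 μ) (p r C : ℝ) : Prop :=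
  ∀ f : Lp ℂ 2 μ,
    eLpNorm (⇑(T f)) (ENNReal.ofReal r) μ ≤
      ENNReal.ofReal C * eLpNorm (⇑f) (ENNReal.ofReal p) μ

/-- An abstract Borel functional calculus on `L²(μ)`, i.e. the assignment `m ↦ m(A)`
given by the spectral theorem for a self-adjoint operator `A` on `L²(μ)`. -/
structure BorelFC (μ : Measure X) where
  fc : (ℝ → ℂ) → (Lp ℂ 2 μ →L[ℂ] Lp ℂ 2 μ)
  fc_add : ∀ m₁ m₂ : ℝ → ℂ, fc (fun t => m₁ t + m₂ t) = fc m₁ + fc m₂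
  fc_smul : ∀ (c : ℂ) (m : ℝ → ℂ), fc (fun t => c * m t) = c • fc m
  fc_mul : ∀ m₁ m₂ : ℝ → ℂ, fc (fun t => m₁ t * m₂ t) = (fc m₁).comp (fc m₂)
  fc_one : fc (fun _ => 1) = ContinuousLinearMap.id ℂ (Lp ℂ 2 μ)
  fc_norm_le : ∀ (m : ℝ → ℂ) (C : ℝ), (∀ t, ‖m t‖ ≤ C) → ‖fc m‖ ≤ C
  fc_star : ∀ m : ℝ → ℂ,
    fc (fun t => (starRingEnd ℂ) (m t)) = ContinuousLinearMap.adjoint (fc m)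

namespace BorelFC

variable {μ : Measure X} (F : BorelFC μ)

/-- The spectral projection `Π_{[a,b]} = 1_{[a,b]}(A)`. -/
def proj (a b : ℝ) : Lp ℂ 2 μ →L[ℂ] Lp ℂ 2 μ :=
  F.fc (Set.indicator (Set.Icc a b) fun _ => (1 : ℂ))

/-- The resolvent `(A² − z)⁻¹` of `A²`, via the functional calculus of `A`. -/
def res2 (z : ℂ) : Lp ℂ 2 μ →L[ℂ] Lp ℂ 2 μ :=
  F.fc fun t => (((t : ℂ)) ^ 2 - z)⁻¹

/-- If `F` is the functional calculus of `A = √(−Δ_g)`, this is the resolvent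
`(Δ_g + z)⁻¹ = (z − A²)⁻¹`. -/
def resLap (z : ℂ) : Lp ℂ 2 μ →L[ℂ] Lp ℂ 2 μ :=
  F.fc fun t => (z - ((t : ℂ)) ^ 2)⁻¹

end BorelFC

/-- The imaginary part `Im T = (T − T^*)/(2i)` of an operator on `L²(μ)`. -/
def imOp {μ : Measure X} (T : Lp ℂ 2 μ →L[ℂ] Lp ℂ 2 μ) : Lp ℂ 2 μ →L[ℂ] Lp ℂ 2 μ :=
  ((2 * Complex.I)⁻¹) • (T - ContinuousLinearMap.adjoint T)

/-- The resolvents `(A−z)⁻¹`, `z ∈ ℂ∖ℝ`, of the self-adjoint operator `A` underlying the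
functional calculus `F` admit consistent bounded extensions `L^{q′} → L²` and
`L^{q′} → L^q`. -/
def ResolventExtends {μ : Measure X} (F : BorelFC μ) (q : ℝ) : Prop :=
  ∀ z : ℂ, z.im ≠ 0 →
    (∃ C : ℝ, OpNormLE μ (F.fc fun t => ((t : ℂ) - z)⁻¹) (conjExp q) 2 C) ∧
    (∃ C : ℝ, OpNormLE μ (F.fc fun t => ((t : ℂ) - z)⁻¹) (conjExp q) q C)

section SpectralHelpers

variable {Y : Type*} [MeasurableSpace Y] {ν : Measure Y}

lemma BorelFC.fc_zero' (F : BorelFC ν) : F.fc (fun _ => 0) = 0 := by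
  have h := F.fc_smul 0 (fun _ => 0)
  simpa using h

lemma BorelFC.fc_finsum (F : BorelFC ν) (s : Finset ℕ) (g : ℕ → ℝ → ℂ) :
    F.fc (fun t => ∑ k ∈ s, g k t) = ∑ k ∈ s, F.fc (g k) := by
  classical
  induction s using Finset.induction with
  | empty => simpa using F.fc_zero'
  | insert _ _ hns ih =>
    simp only [Finset.sum_insert hns]
    rw [F.fc_add, ih]

lemma elpTwo (g : Lp ℂ 2 ν) :
    eLpNorm (⇑g) (ENNReal.ofReal 2) ν = ENNReal.ofReal ‖g‖ := by
  have h2 : ENNReal.ofReal 2 = (2 : ENNReal) := by norm_num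
  rw [h2, Lp.norm_def, ENNReal.ofReal_toReal (Lp.eLpNorm_ne_top g)]

lemma key1 (F : BorelFC ν) (p : ℝ) (m : ℝ → ℂ)
    (N : ℕ) (τ : ℕ → ℝ) (hτ : ∀ k ≤ N, τ k ≤ τ (k + 1))
    (P b : ℕ → ℝ)
    (hP : ∀ k ≤ N, 0 ≤ P k ∧ OpNormLE ν (F.proj (τ k) (τ (k + 1))) p 2 (P k))
    (hb : ∀ k ≤ N, 0 ≤ b k ∧ ∀ t ∈ Set.Icc (τ k) (τ (k + 1)), ‖m t‖ ≤ b k) :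
    OpNormLE ν ((F.proj (τ 0) (τ (N + 1))).comp (F.fc m)) p 2
      (Real.sqrt (∑ k ∈ Finset.range (N + 1), b k ^ 2 * P k ^ 2)) := by
  classical
  have τaux : ∀ j, j ≤ N + 1 → ∀ i, i ≤ j → τ i ≤ τ j := by
    intro j
    induction j with
    | zero =>
      intro _ i hi
      have hi0 : i = 0 := Nat.le_zero.mp hi
      simp [hi0]
    | succ n ih =>
      intro hj i hi
      by_cases hin : i ≤ n
      · exact le_trans (ih (by omega) i hin) (hτ n (by omega))
      · have : i = n + 1 := by omega
        simp [this]
  have τmono : ∀ i j, i ≤ j → j ≤ N + 1 → τ i ≤ τ j := fun i j hij hj => τaux j hj i hij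
  set S : ℕ → Set ℝ := fun k =>
    if k = N then Set.Icc (τ N) (τ (N + 1)) else Set.Ico (τ k) (τ (k + 1)) with hS
  have hSsub : ∀ k, S k ⊆ Set.Icc (τ k) (τ (k + 1)) := by
    intro k
    rcases eq_or_ne k N with rfl | hk
    · simp [hS]
    · simp only [hS, if_neg hk]
      exact Set.Ico_subset_Icc_self
  have hdisj : ∀ k l, k < l → l ≤ N → ∀ t, t ∈ S k → t ∈ S l → False := by
    intro k l hkl hlN t htk htl
    have hkN : k ≠ N := by omega
    simp only [hS, if_neg hkN] at htk
    have h2 : τ l ≤ t := (hSsub l htl).1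
    have h3 : τ (k + 1) ≤ τ l := τmono (k + 1) l hkl (by omega)
    have := htk.2
    linarith
  have hcover : ∀ t, t ∈ Set.Icc (τ 0) (τ (N + 1)) → ∃ k, k ≤ N ∧ t ∈ S k := by
    intro t ht
    set k := Nat.findGreatest (fun k => τ k ≤ t) N with hk
    have hkN : k ≤ N := Nat.findGreatest_le N
    have hkt : τ k ≤ t := Nat.findGreatest_spec (P := fun k => τ k ≤ t) (Nat.zero_le N) ht.1
    rcases eq_or_ne k N with hkeq | hkne
    · refine ⟨N, le_refl N, ?_⟩
      simp only [hS, if_pos rfl]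
      exact ⟨hkeq ▸ hkt, ht.2⟩
    · refine ⟨k, hkN, ?_⟩
      have hnot : ¬ τ (k + 1) ≤ t :=
        Nat.findGreatest_is_greatest (P := fun k => τ k ≤ t) (k := k + 1) (n := N) (by omega) (by omega)
      simp only [hS, if_neg hkne]
      exact ⟨hkt, lt_of_not_ge hnot⟩
  set h : ℕ → ℝ → ℂ := fun k t => Set.indicator (S k) (fun _ => (1 : ℂ)) t * m t with hh
  have hdecomp : (fun t => Set.indicator (Set.Icc (τ 0) (τ (N + 1))) (fun _ => (1 : ℂ)) t * m t)
      = fun t => ∑ k ∈ Finset.range (N + 1), h k t := by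
    funext t
    simp only [hh]
    rw [← Finset.sum_mul]
    congr 1
    by_cases ht : t ∈ Set.Icc (τ 0) (τ (N + 1))
    · rw [Set.indicator_of_mem ht]
      obtain ⟨k₀, hk₀N, hk₀⟩ := hcover t ht
      rw [Finset.sum_eq_single k₀]
      · rw [Set.indicator_of_mem hk₀]
      · intro l hl hne
        refine Set.indicator_of_notMem (fun htl => ?_) _
        rcases lt_or_gt_of_ne hne with h' | h'
        · exact hdisj l k₀ h' hk₀N t htl hk₀
        · exact hdisj k₀ l h' (Nat.lt_succ_iff.mp (Finset.mem_range.mp hl)) t hk₀ htl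
      · intro hcon
        exact absurd (Finset.mem_range.mpr (by omega)) hcon
    · rw [Set.indicator_of_notMem ht]
      refine (Finset.sum_eq_zero ?_).symm
      intro l hl
      refine Set.indicator_of_notMem (fun htl => ht ?_) _
      have hsub := hSsub l htl
      have hlN : l ≤ N := Nat.lt_succ_iff.mp (Finset.mem_range.mp hl)
      exact ⟨le_trans (τmono 0 l (Nat.zero_le l) (by omega)) hsub.1,
        le_trans hsub.2 (τmono (l + 1) (N + 1) (by omega) (le_refl _))⟩
  have hT : (F.proj (τ 0) (τ (N + 1))).comp (F.fc m)
      = ∑ k ∈ Finset.range (N + 1), F.fc (h k) := by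
    calc (F.proj (τ 0) (τ (N + 1))).comp (F.fc m)
        = F.fc (fun t => Set.indicator (Set.Icc (τ 0) (τ (N + 1))) (fun _ => (1 : ℂ)) t * m t) :=
          (F.fc_mul _ m).symm
      _ = F.fc (fun t => ∑ k ∈ Finset.range (N + 1), h k t) := by rw [hdecomp]
      _ = ∑ k ∈ Finset.range (N + 1), F.fc (h k) := F.fc_finsum _ _
  have hfc_proj : ∀ k, F.fc (h k) = (F.fc (h k)).comp (F.proj (τ k) (τ (k + 1))) := by
    intro k
    have heq : h k = fun t => h k t * Set.indicator (Set.Icc (τ k) (τ (k + 1))) (fun _ => (1 : ℂ)) t := by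
      funext t
      by_cases ht : t ∈ S k
      · rw [Set.indicator_of_mem (hSsub k ht)]
        ring
      · simp [hh, Set.indicator_of_notMem ht]
    conv_lhs => rw [heq]
    exact F.fc_mul _ _
  have hnorm : ∀ k ≤ N, ‖F.fc (h k)‖ ≤ b k := by
    intro k hk
    refine F.fc_norm_le _ _ (fun t => ?_)
    by_cases ht : t ∈ S k
    · simp only [hh, Set.indicator_of_mem ht, one_mul]
      exact (hb k hk).2 t (hSsub k ht)
    · simp only [hh, Set.indicator_of_notMem ht, zero_mul, norm_zero]
      exact (hb k hk).1
  have hgb : ∀ (f : Lp ℂ 2 ν), ∀ k ≤ N,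
      ‖F.fc (h k) f‖ ≤ b k * ‖F.proj (τ k) (τ (k + 1)) f‖ := by
    intro f k hk
    conv_lhs => rw [hfc_proj k]
    calc ‖(F.fc (h k)) ((F.proj (τ k) (τ (k + 1))) f)‖
        ≤ ‖F.fc (h k)‖ * ‖(F.proj (τ k) (τ (k + 1))) f‖ :=
          (F.fc (h k)).le_opNorm _
      _ ≤ b k * ‖(F.proj (τ k) (τ (k + 1))) f‖ :=
          mul_le_mul_of_nonneg_right (hnorm k hk) (norm_nonneg _)
  have horth : ∀ (f : Lp ℂ 2 ν), ∀ k l, k ≤ N → l ≤ N → k ≠ l →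
      (inner ℂ (F.fc (h k) f) (F.fc (h l) f) : ℂ) = 0 := by
    intro f k l hk hl hne
    have hzero : (fun t => (starRingEnd ℂ) (h k t) * h l t) = fun _ => (0 : ℂ) := by
      funext t
      by_cases ht : t ∈ S k
      · have htl : t ∉ S l := by
          intro htl
          rcases lt_or_gt_of_ne hne with h' | h'
          · exact hdisj k l h' hl t ht htl
          · exact hdisj l k h' hk t htl ht
        simp [hh, Set.indicator_of_notMem htl]
      · simp [hh, Set.indicator_of_notMem ht]
    have hadj : F.fc (h k) = ContinuousLinearMap.adjoint (F.fc (fun t => (starRingEnd ℂ) (h k t))) := by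
      have hst := F.fc_star (fun t => (starRingEnd ℂ) (h k t))
      simpa using hst
    rw [hadj, ContinuousLinearMap.adjoint_inner_left]
    have hcomp : (F.fc fun t => (starRingEnd ℂ) (h k t)).comp (F.fc (h l)) = 0 := by
      rw [← F.fc_mul, hzero]
      exact F.fc_zero'
    have h0 : (F.fc fun t => (starRingEnd ℂ) (h k t)) ((F.fc (h l)) f) = 0 := by
      have : ((F.fc fun t => (starRingEnd ℂ) (h k t)).comp (F.fc (h l))) f = 0 := by
        rw [hcomp]; rfl
      simpa using this
    rw [h0, inner_zero_right]
  have hpyth : ∀ (f : Lp ℂ 2 ν),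
      ‖∑ k ∈ Finset.range (N + 1), F.fc (h k) f‖ ^ 2
        = ∑ k ∈ Finset.range (N + 1), ‖F.fc (h k) f‖ ^ 2 := by
    intro f
    have hinner : (inner ℂ (∑ k ∈ Finset.range (N + 1), F.fc (h k) f)
        (∑ k ∈ Finset.range (N + 1), F.fc (h k) f) : ℂ)
        = ∑ k ∈ Finset.range (N + 1), (inner ℂ (F.fc (h k) f) (F.fc (h k) f) : ℂ) := by
      rw [sum_inner]
      refine Finset.sum_congr rfl (fun k hk => ?_)
      rw [inner_sum]
      rw [Finset.sum_eq_single k]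
      · intro l hl hne
        exact horth f k l (Nat.lt_succ_iff.mp (Finset.mem_range.mp hk))
          (Nat.lt_succ_iff.mp (Finset.mem_range.mp hl)) (Ne.symm hne)
      · intro hcon; exact absurd hk hcon
    calc ‖∑ k ∈ Finset.range (N + 1), F.fc (h k) f‖ ^ 2
        = RCLike.re (inner ℂ (∑ k ∈ Finset.range (N + 1), F.fc (h k) f)
            (∑ k ∈ Finset.range (N + 1), F.fc (h k) f) : ℂ) :=
          (inner_self_eq_norm_sq _).symm
      _ = RCLike.re (∑ k ∈ Finset.range (N + 1), (inner ℂ (F.fc (h k) f) (F.fc (h k) f) : ℂ)) := by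
          rw [hinner]
      _ = ∑ k ∈ Finset.range (N + 1), RCLike.re (inner ℂ (F.fc (h k) f) (F.fc (h k) f) : ℂ) :=
          map_sum _ _ _
      _ = ∑ k ∈ Finset.range (N + 1), ‖F.fc (h k) f‖ ^ 2 :=
          Finset.sum_congr rfl (fun k _ => inner_self_eq_norm_sq _)
  -- main argument
  intro f
  rw [hT]
  have happ : (∑ k ∈ Finset.range (N + 1), F.fc (h k)) f
      = ∑ k ∈ Finset.range (N + 1), F.fc (h k) f := by
    simp
  rw [happ]
  set C := Real.sqrt (∑ k ∈ Finset.range (N + 1), b k ^ 2 * P k ^ 2) with hC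
  have hCnn : 0 ≤ C := Real.sqrt_nonneg _
  by_cases hE : eLpNorm (⇑f) (ENNReal.ofReal p) ν = ⊤
  · by_cases hC0 : ENNReal.ofReal C = 0
    · -- every summand vanishes
      have hsum0 : (∑ k ∈ Finset.range (N + 1), b k ^ 2 * P k ^ 2) = 0 := by
        have : C = 0 := le_antisymm (by simpa using ENNReal.ofReal_eq_zero.mp hC0) hCnn
        have hnn : 0 ≤ ∑ k ∈ Finset.range (N + 1), b k ^ 2 * P k ^ 2 :=
          Finset.sum_nonneg (fun k _ => mul_nonneg (sq_nonneg _) (sq_nonneg _))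
        nlinarith [Real.sq_sqrt hnn]
      have hterm : ∀ k ∈ Finset.range (N + 1), F.fc (h k) f = 0 := by
        intro k hk
        have hkN : k ≤ N := Nat.lt_succ_iff.mp (Finset.mem_range.mp hk)
        have h0 : b k ^ 2 * P k ^ 2 = 0 := by
          have hnn : ∀ j ∈ Finset.range (N + 1), 0 ≤ b j ^ 2 * P j ^ 2 :=
            fun j _ => mul_nonneg (sq_nonneg _) (sq_nonneg _)
          exact (Finset.sum_eq_zero_iff_of_nonneg hnn).mp hsum0 k hk
        rcases mul_eq_zero.mp h0 with hb0 | hP0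
        · -- b k = 0, so the operator is zero
          have : ‖F.fc (h k)‖ ≤ 0 := le_trans (hnorm k hkN) (by nlinarith [pow_eq_zero_iff (n := 2) (two_ne_zero) |>.mp hb0])
          have hop : F.fc (h k) = 0 := le_antisymm this (norm_nonneg _) |> norm_eq_zero.mp
          simp [hop]
        · -- P k = 0, so the projection of f vanishes
          have hPk : P k = 0 := pow_eq_zero_iff (n := 2) (two_ne_zero) |>.mp hP0
          have hle := (hP k hkN).2 f
          rw [hPk] at hle
          simp only [ENNReal.ofReal_zero, zero_mul] at hle
          have hproj0 : F.proj (τ k) (τ (k + 1)) f = 0 := by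
            have := elpTwo (F.proj (τ k) (τ (k + 1)) f)
            rw [this] at hle
            have : ‖F.proj (τ k) (τ (k + 1)) f‖ = 0 :=
              le_antisymm (by simpa using ENNReal.ofReal_eq_zero.mp (le_antisymm hle bot_le)) (norm_nonneg _)
            exact norm_eq_zero.mp this
          rw [hfc_proj k]
          simp [hproj0]
      rw [Finset.sum_eq_zero hterm]
      have : eLpNorm (⇑(0 : Lp ℂ 2 ν)) (ENNReal.ofReal 2) ν = 0 := by
        rw [eLpNorm_congr_ae (Lp.coeFn_zero ℂ 2 ν)]
        exact eLpNorm_zero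
      rw [this]
      exact zero_le
    · rw [hE, ENNReal.mul_top hC0]
      exact le_top
  · -- finite case
    set e := (eLpNorm (⇑f) (ENNReal.ofReal p) ν).toReal with he
    have hEe : eLpNorm (⇑f) (ENNReal.ofReal p) ν = ENNReal.ofReal e :=
      (ENNReal.ofReal_toReal hE).symm
    have hproj_bound : ∀ k ≤ N, ‖F.proj (τ k) (τ (k + 1)) f‖ ≤ P k * e := by
      intro k hk
      have hle := (hP k hk).2 f
      rw [elpTwo, hEe, ← ENNReal.ofReal_mul (hP k hk).1] at hle
      exact (ENNReal.ofReal_le_ofReal_iff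
        (mul_nonneg (hP k hk).1 ENNReal.toReal_nonneg)).mp hle
    have hknorm : ∀ k ≤ N, ‖F.fc (h k) f‖ ≤ b k * (P k * e) := by
      intro k hk
      exact le_trans (hgb f k hk)
        (mul_le_mul_of_nonneg_left (hproj_bound k hk) (hb k hk).1)
    have hsq : ‖∑ k ∈ Finset.range (N + 1), F.fc (h k) f‖ ^ 2
        ≤ (∑ k ∈ Finset.range (N + 1), b k ^ 2 * P k ^ 2) * e ^ 2 := by
      rw [hpyth f, Finset.sum_mul]
      refine Finset.sum_le_sum (fun k hk => ?_)
      have hkN : k ≤ N := Nat.lt_succ_iff.mp (Finset.mem_range.mp hk)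
      have h1 : ‖F.fc (h k) f‖ ^ 2 ≤ (b k * (P k * e)) ^ 2 :=
        pow_le_pow_left₀ (norm_nonneg _) (hknorm k hkN) 2
      calc ‖F.fc (h k) f‖ ^ 2 ≤ (b k * (P k * e)) ^ 2 := h1
        _ = b k ^ 2 * P k ^ 2 * e ^ 2 := by ring
    have hfinal : ‖∑ k ∈ Finset.range (N + 1), F.fc (h k) f‖ ≤ C * e := by
      have hnn : 0 ≤ (∑ k ∈ Finset.range (N + 1), b k ^ 2 * P k ^ 2) :=
        Finset.sum_nonneg (fun k _ => mul_nonneg (sq_nonneg _) (sq_nonneg _))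
      calc ‖∑ k ∈ Finset.range (N + 1), F.fc (h k) f‖
          = Real.sqrt (‖∑ k ∈ Finset.range (N + 1), F.fc (h k) f‖ ^ 2) :=
            (Real.sqrt_sq (norm_nonneg _)).symm
        _ ≤ Real.sqrt ((∑ k ∈ Finset.range (N + 1), b k ^ 2 * P k ^ 2) * e ^ 2) :=
            Real.sqrt_le_sqrt hsq
        _ = C * e := by
            rw [Real.sqrt_mul hnn, Real.sqrt_sq ENNReal.toReal_nonneg]
    rw [elpTwo, hEe, ← ENNReal.ofReal_mul hCnn]
    exact ENNReal.ofReal_le_ofReal hfinal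


lemma dual_bound [SigmaFinite ν] {q : ℝ} (hq : 2 < q) (h : Lp ℂ 2 ν) (K : ENNReal)
    (hdual : ∀ g : Lp ℂ 2 ν,
      ENNReal.ofReal ‖(inner ℂ g h : ℂ)‖ ≤ K * eLpNorm (⇑g) (ENNReal.ofReal (conjExp q)) ν) :
    eLpNorm (⇑h) (ENNReal.ofReal q) ν ≤ K := by
  classical
  have hq0 : (0 : ℝ) < q := by linarith
  have hq1 : (1 : ℝ) < q := by linarith
  have hq1' : (0 : ℝ) < q - 1 := by linarith
  set p : ℝ := conjExp q with hp
  have hp_pos : 0 < p := by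
    rw [hp, conjExp]
    positivity
  have hqp : (q - 1) * p = q := by
    rw [hp, conjExp]
    field_simp
  have hsum_exp : 1 / q + 1 / p = 1 := by
    rw [hp, conjExp]
    field_simp
    ring
  have hmeas_h : Measurable (⇑h) := (Lp.stronglyMeasurable h).measurable
  set A : ℕ → Set Y := fun n => spanningSets ν n ∩ {x | ‖(⇑h : Y → ℂ) x‖ ≤ n} with hA
  have hA_meas : ∀ n, MeasurableSet (A n) := fun n =>
    (measurableSet_spanningSets ν n).inter (measurableSet_le hmeas_h.norm measurable_const)
  have hA_mono : Monotone A := by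
    intro a c hac
    refine Set.inter_subset_inter (monotone_spanningSets ν hac) (fun x hx => ?_)
    simp only [Set.mem_setOf_eq] at hx ⊢
    exact le_trans hx (by exact_mod_cast Nat.cast_le.mpr hac)
  have hA_cover : ∀ x, ∃ n, x ∈ A n := by
    intro x
    have hx : x ∈ ⋃ i, spanningSets ν i := by
      rw [iUnion_spanningSets]; trivial
    obtain ⟨m, hm⟩ := Set.mem_iUnion.mp hx
    refine ⟨max m ⌈‖(⇑h : Y → ℂ) x‖⌉₊, monotone_spanningSets ν (le_max_left _ _) hm, ?_⟩
    simp only [Set.mem_setOf_eq]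
    calc ‖(⇑h : Y → ℂ) x‖ ≤ (⌈‖(⇑h : Y → ℂ) x‖⌉₊ : ℝ) := Nat.le_ceil _
      _ ≤ ((max m ⌈‖(⇑h : Y → ℂ) x‖⌉₊ : ℕ) : ℝ) := by exact_mod_cast Nat.cast_le.mpr (le_max_right _ _)
  set φ : ℕ → Y → ℂ := fun n => (A n).indicator
    (fun x => (⇑h : Y → ℂ) x * ((‖(⇑h : Y → ℂ) x‖ ^ (q - 2) : ℝ) : ℂ)) with hφ
  set ψ : ℕ → Y → ℝ := fun n => (A n).indicator (fun x => ‖(⇑h : Y → ℂ) x‖ ^ q) with hψ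
  have hrpow_key : ∀ x : Y, ‖(⇑h : Y → ℂ) x‖ * ‖(⇑h : Y → ℂ) x‖ ^ (q - 2) = ‖(⇑h : Y → ℂ) x‖ ^ (q - 1) := by
    intro x
    rcases eq_or_ne ((⇑h : Y → ℂ) x) 0 with h0 | h0
    · rw [h0]
      simp [Real.zero_rpow (by linarith : q - 2 ≠ 0), Real.zero_rpow (by linarith : q - 1 ≠ 0)]
    · have hpos : 0 < ‖(⇑h : Y → ℂ) x‖ := norm_pos_iff.mpr h0
      have hadd := Real.rpow_add hpos 1 (q - 2)
      rw [Real.rpow_one] at hadd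
      rw [← hadd]
      congr 1
      ring
  have hφ_norm : ∀ n x, ‖φ n x‖ = (A n).indicator (fun x => ‖(⇑h : Y → ℂ) x‖ ^ (q - 1)) x := by
    intro n x
    by_cases hx : x ∈ A n
    · rw [hφ]
      simp only [Set.indicator_of_mem hx]
      rw [norm_mul, Complex.norm_real, Real.norm_eq_abs,
        _root_.abs_of_nonneg (Real.rpow_nonneg (norm_nonneg _) _)]
      exact hrpow_key x
    · simp [hφ, Set.indicator_of_notMem hx]
  have hφ_meas : ∀ n, Measurable (φ n) := by
    intro n
    refine Measurable.indicator ?_ (hA_meas n)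
    have : Measurable fun x => ‖(⇑h : Y → ℂ) x‖ ^ (q - 2) := by fun_prop
    exact hmeas_h.mul (Complex.measurable_ofReal.comp this)
  have hφ_mem : ∀ n, MemLp (φ n) 2 ν := by
    intro n
    refine ⟨(hφ_meas n).aestronglyMeasurable, ?_⟩
    have hb : ∀ x, ‖φ n x‖ ≤ ‖(A n).indicator (fun _ => ((n : ℝ) ^ (q - 1) : ℝ)) x‖ := by
      intro x
      rw [hφ_norm n x]
      by_cases hx : x ∈ A n
      · simp only [Set.indicator_of_mem hx]
        rw [Real.norm_eq_abs, _root_.abs_of_nonneg (Real.rpow_nonneg (Nat.cast_nonneg n) _)]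
        exact Real.rpow_le_rpow (norm_nonneg _) hx.2 (by linarith)
      · simp [Set.indicator_of_notMem hx]
    calc eLpNorm (φ n) 2 ν ≤ eLpNorm ((A n).indicator (fun _ => ((n : ℝ) ^ (q - 1) : ℝ))) 2 ν :=
          eLpNorm_mono hb
      _ = ‖((n : ℝ) ^ (q - 1) : ℝ)‖₊ * ν (A n) ^ (1 / (2 : ENNReal).toReal) :=
          eLpNorm_indicator_const (hA_meas n) two_ne_zero ENNReal.ofNat_ne_top
      _ < ⊤ := by
          refine ENNReal.mul_lt_top ENNReal.coe_lt_top ?_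
          refine ENNReal.rpow_lt_top_of_nonneg (by norm_num) ?_
          exact ((measure_mono Set.inter_subset_left).trans_lt (measure_spanningSets_lt_top ν n)).ne
  set g : ℕ → Lp ℂ 2 ν := fun n => MemLp.toLp (φ n) (hφ_mem n) with hg
  set I : ℕ → ENNReal := fun n => ∫⁻ x, ENNReal.ofReal (ψ n x) ∂ν with hI
  have hψ_ofReal : ∀ n x, ENNReal.ofReal (ψ n x)
      = (A n).indicator (fun x => ENNReal.ofReal (‖(⇑h : Y → ℂ) x‖ ^ q)) x := by
    intro n x
    by_cases hx : x ∈ A n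
    · simp [hψ, Set.indicator_of_mem hx]
    · simp [hψ, Set.indicator_of_notMem hx]
  have hI_restrict : ∀ n, I n = ∫⁻ x in A n, ENNReal.ofReal (‖(⇑h : Y → ℂ) x‖ ^ q) ∂ν := by
    intro n
    have h0 : I n = ∫⁻ x, ENNReal.ofReal (ψ n x) ∂ν := rfl
    rw [h0, lintegral_congr (hψ_ofReal n)]
    exact lintegral_indicator (hA_meas n) _
  have hI_fin : ∀ n, I n ≠ ⊤ := by
    intro n
    rw [hI_restrict n]
    have hle : ∫⁻ x in A n, ENNReal.ofReal (‖(⇑h : Y → ℂ) x‖ ^ q) ∂ν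
        ≤ ∫⁻ _ in A n, ENNReal.ofReal ((n : ℝ) ^ q) ∂ν := by
      refine setLIntegral_mono measurable_const (fun x hx => ?_)
      exact ENNReal.ofReal_le_ofReal (Real.rpow_le_rpow (norm_nonneg _) hx.2 hq0.le)
    refine (lt_of_le_of_lt hle ?_).ne
    rw [setLIntegral_const]
    refine ENNReal.mul_lt_top ENNReal.ofReal_lt_top ?_
    exact (measure_mono Set.inter_subset_left).trans_lt (measure_spanningSets_lt_top ν n)
  have hψ_nonneg : ∀ n x, 0 ≤ ψ n x := by
    intro n x
    by_cases hx : x ∈ A n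
    · simp only [hψ, Set.indicator_of_mem hx]
      exact Real.rpow_nonneg (norm_nonneg _) _
    · simp [hψ, Set.indicator_of_notMem hx]
  have hψ_meas : ∀ n, Measurable (ψ n) := by
    intro n
    refine Measurable.indicator ?_ (hA_meas n)
    fun_prop
  have hinner_eq : ∀ n, (inner ℂ (g n) h : ℂ) = (((I n).toReal : ℝ) : ℂ) := by
    intro n
    have h1 : (inner ℂ (g n) h : ℂ) = ∫ x, (inner ℂ ((⇑(g n) : Y → ℂ) x) ((⇑h : Y → ℂ) x) : ℂ) ∂ν :=
      L2.inner_def (g n) h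
    have h2 : ∫ x, (inner ℂ ((⇑(g n) : Y → ℂ) x) ((⇑h : Y → ℂ) x) : ℂ) ∂ν
        = ∫ x, (inner ℂ (φ n x) ((⇑h : Y → ℂ) x) : ℂ) ∂ν := by
      refine integral_congr_ae ?_
      filter_upwards [MemLp.coeFn_toLp (hφ_mem n)] with x hx
      rw [hx]
    have h3 : ∀ x, (inner ℂ (φ n x) ((⇑h : Y → ℂ) x) : ℂ) = ((ψ n x : ℝ) : ℂ) := by
      intro x
      rw [RCLike.inner_apply']
      by_cases hx : x ∈ A n
      · simp only [hφ, hψ, Set.indicator_of_mem hx]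
        rw [map_mul]
        have hconj_real : (starRingEnd ℂ) ((‖(⇑h : Y → ℂ) x‖ ^ (q - 2) : ℝ) : ℂ)
            = ((‖(⇑h : Y → ℂ) x‖ ^ (q - 2) : ℝ) : ℂ) := Complex.conj_ofReal _
        rw [hconj_real]
        have : (starRingEnd ℂ) ((⇑h : Y → ℂ) x) * ((‖(⇑h : Y → ℂ) x‖ ^ (q - 2) : ℝ) : ℂ) * (⇑h : Y → ℂ) x
            = ((starRingEnd ℂ) ((⇑h : Y → ℂ) x) * (⇑h : Y → ℂ) x) * ((‖(⇑h : Y → ℂ) x‖ ^ (q - 2) : ℝ) : ℂ) := by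
          ring
        rw [this]
        have hcsq : (starRingEnd ℂ) ((⇑h : Y → ℂ) x) * (⇑h : Y → ℂ) x
            = ((‖(⇑h : Y → ℂ) x‖ ^ 2 : ℝ) : ℂ) := by
          rw [mul_comm, Complex.mul_conj]
          norm_cast
          rw [Complex.normSq_eq_norm_sq]
        rw [hcsq, ← Complex.ofReal_mul]
        congr 1
        rcases eq_or_ne ((⇑h : Y → ℂ) x) 0 with h0 | h0
        · rw [h0]
          simp [Real.zero_rpow (by linarith : q - 2 ≠ 0), Real.zero_rpow (by linarith : q ≠ 0)]
        · have hpos : 0 < ‖(⇑h : Y → ℂ) x‖ := norm_pos_iff.mpr h0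
          have hadd := Real.rpow_add hpos 2 (q - 2)
          rw [Real.rpow_two] at hadd
          rw [← hadd]
          congr 1
          ring
      · simp [hφ, hψ, Set.indicator_of_notMem hx]
    have h4 : ∫ x, (inner ℂ (φ n x) ((⇑h : Y → ℂ) x) : ℂ) ∂ν = ((∫ x, ψ n x ∂ν : ℝ) : ℂ) := by
      rw [show (fun x => (inner ℂ (φ n x) ((⇑h : Y → ℂ) x) : ℂ)) = fun x => ((ψ n x : ℝ) : ℂ) from funext h3]
      exact integral_ofReal
    have h5 : ∫ x, ψ n x ∂ν = (I n).toReal := by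
      rw [integral_eq_lintegral_of_nonneg_ae (Filter.Eventually.of_forall (hψ_nonneg n))
        (hψ_meas n).aestronglyMeasurable]
    rw [h1, h2, h4, h5]
  have hg_norm : ∀ n, ENNReal.ofReal ‖(inner ℂ (g n) h : ℂ)‖ = I n := by
    intro n
    rw [hinner_eq n]
    rw [Complex.norm_real, Real.norm_eq_abs, _root_.abs_of_nonneg ENNReal.toReal_nonneg]
    exact ENNReal.ofReal_toReal (hI_fin n)
  have hg_eLp : ∀ n, eLpNorm (⇑(g n)) (ENNReal.ofReal p) ν = I n ^ (1 / p) := by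
    intro n
    rw [eLpNorm_congr_ae (MemLp.coeFn_toLp (hφ_mem n))]
    rw [eLpNorm_eq_lintegral_rpow_enorm_toReal (by simpa using (ENNReal.ofReal_pos.mpr hp_pos).ne')
      ENNReal.ofReal_ne_top]
    rw [ENNReal.toReal_ofReal hp_pos.le]
    congr 1
    refine lintegral_congr (fun x => ?_)
    rw [← ofReal_norm, hφ_norm n x, hψ_ofReal n x]
    by_cases hx : x ∈ A n
    · rw [Set.indicator_of_mem hx, Set.indicator_of_mem hx,
        ENNReal.ofReal_rpow_of_nonneg (Real.rpow_nonneg (norm_nonneg _) _) hp_pos.le]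
      congr 1
      rw [← Real.rpow_mul (norm_nonneg _), hqp]
    · rw [Set.indicator_of_notMem hx, Set.indicator_of_notMem hx, ENNReal.ofReal_zero,
        ENNReal.zero_rpow_of_pos hp_pos]
  have hmain : ∀ n, I n ^ (1 / q) ≤ K := by
    intro n
    have hle : I n ≤ K * I n ^ (1 / p) := by
      have := hdual (g n)
      rwa [hg_norm n, hg_eLp n] at this
    rcases eq_or_ne (I n) 0 with hI0 | hI0
    · rw [hI0, ENNReal.zero_rpow_of_pos (by positivity)]
      exact zero_le
    · set J := I n ^ (1 / p) with hJ
      have hJ0 : J ≠ 0 := by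
        rw [hJ]
        simp [ENNReal.rpow_eq_zero_iff, hI0, hI_fin n, (by positivity : (0:ℝ) < 1 / p)]
      have hJt : J ≠ ⊤ := ENNReal.rpow_ne_top_of_nonneg (by positivity) (hI_fin n)
      have hprod : I n ^ (1 / q) * J = I n := by
        rw [hJ, ← ENNReal.rpow_add _ _ hI0 (hI_fin n), hsum_exp, ENNReal.rpow_one]
      have hle2 : I n ^ (1 / q) * J ≤ K * J := by rw [hprod]; exact hle
      exact (ENNReal.mul_le_mul_iff_left hJ0 hJt).mp hle2
  have hIq : ∀ n, I n ≤ K ^ q := by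
    intro n
    have h1 : (I n ^ (1 / q)) ^ q ≤ K ^ q := ENNReal.rpow_le_rpow (hmain n) hq0.le
    rwa [← ENNReal.rpow_mul, one_div_mul_cancel hq0.ne', ENNReal.rpow_one] at h1
  have hlim : ∫⁻ x, ENNReal.ofReal (‖(⇑h : Y → ℂ) x‖ ^ q) ∂ν ≤ K ^ q := by
    set Fn : ℕ → Y → ENNReal := fun n x =>
      (A n).indicator (fun x => ENNReal.ofReal (‖(⇑h : Y → ℂ) x‖ ^ q)) x with hFn
    have hFn_meas : ∀ n, Measurable (Fn n) := by
      intro n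
      refine Measurable.indicator ?_ (hA_meas n)
      have : Measurable fun x => ‖(⇑h : Y → ℂ) x‖ ^ q := by fun_prop
      exact this.ennreal_ofReal
    have hFn_mono : Monotone Fn := by
      intro a c hac x
      exact Set.indicator_le_indicator_of_subset (hA_mono hac) (fun _ => zero_le) x
    have hFn_lim : ∀ x, ⨆ n, Fn n x = ENNReal.ofReal (‖(⇑h : Y → ℂ) x‖ ^ q) := by
      intro x
      obtain ⟨n₀, hn₀⟩ := hA_cover x
      refine le_antisymm (iSup_le fun n => ?_) (le_iSup_of_le n₀ ?_)
      · exact Set.indicator_le_self _ _ x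
      · have hx0 : Fn n₀ x = ENNReal.ofReal (‖(⇑h : Y → ℂ) x‖ ^ q) := Set.indicator_of_mem hn₀ _
        rw [hx0]
    have hmc : ∫⁻ x, ENNReal.ofReal (‖(⇑h : Y → ℂ) x‖ ^ q) ∂ν = ⨆ n, I n := by
      have h1 : ∀ x, ENNReal.ofReal (‖(⇑h : Y → ℂ) x‖ ^ q) = ⨆ n, Fn n x :=
        fun x => (hFn_lim x).symm
      rw [lintegral_congr h1, lintegral_iSup hFn_meas hFn_mono]
      exact iSup_congr (fun n => lintegral_congr (fun x => (hψ_ofReal n x).symm))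
    rw [hmc]
    exact iSup_le hIq
  -- conclude
  rw [eLpNorm_eq_lintegral_rpow_enorm_toReal (by simpa using (ENNReal.ofReal_pos.mpr hq0).ne')
    ENNReal.ofReal_ne_top]
  rw [ENNReal.toReal_ofReal hq0.le]
  have hintegrand : ∀ x, ‖(⇑h : Y → ℂ) x‖ₑ ^ q
      = ENNReal.ofReal (‖(⇑h : Y → ℂ) x‖ ^ q) := by
    intro x
    rw [← ofReal_norm]
    exact ENNReal.ofReal_rpow_of_nonneg (norm_nonneg _) hq0.le
  rw [lintegral_congr hintegrand]
  calc (∫⁻ x, ENNReal.ofReal (‖(⇑h : Y → ℂ) x‖ ^ q) ∂ν) ^ (1 / q)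
      ≤ (K ^ q) ^ (1 / q) := ENNReal.rpow_le_rpow hlim (by positivity)
    _ = K := by rw [← ENNReal.rpow_mul, mul_one_div_cancel hq0.ne', ENNReal.rpow_one]


end SpectralHelpers

/-- **Spectral multiplier bound** (Lemma 3.1 of the paper). In the abstract setting —
`X` a σ-finite measure space, `A` self-adjoint on `L²(X)` with Borel functional calculus
`F`, `2 < q < ∞`, and resolvents consistently extended `L^{q′} → L²`, `L^{q′} → L^q` —
let `m₁, m₂ : [0,∞) → ℂ` be bounded Borel functions, `m = m₁m₂`,
`J = [τ₀, τ_{N+1}] ⊆ [0,∞)` an interval partitioned by `τ₀ ≤ τ₁ ≤ ⋯ ≤ τ_{N+1}`.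
If `‖Π_{[τ_k,τ_{k+1}]}‖_{L^{q′}→L²} ≤ P k` and `sup_{[τ_k,τ_{k+1}]}|m_j| ≤ b_j k` for
`0 ≤ k ≤ N`, then with `M_j = (Σ_{k≤N} (b_j k)²(P k)²)^{1/2}`:
`‖1_J(A) m_j(A)‖_{L^{q′}→L²} ≤ M_j` and `‖1_J(A) m(A)‖_{L^{q′}→L^q} ≤ M₁M₂`. -/
theorem spectral_multiplier_bound
    {X : Type*} [MeasurableSpace X] (ν : Measure X) [SigmaFinite ν]
    (F : BorelFC ν) (q : ℝ) (hq : 2 < q) (hres : ResolventExtends F q)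
    (m₁ m₂ : ℝ → ℂ) (hm₁ : Measurable m₁) (hm₂ : Measurable m₂)
    (hm₁b : ∃ C : ℝ, ∀ t : ℝ, ‖m₁ t‖ ≤ C) (hm₂b : ∃ C : ℝ, ∀ t : ℝ, ‖m₂ t‖ ≤ C)
    (N : ℕ) (τ : ℕ → ℝ) (hτ0 : 0 ≤ τ 0) (hτ : ∀ k ≤ N, τ k ≤ τ (k + 1))
    (P b₁ b₂ : ℕ → ℝ)
    (hP : ∀ k ≤ N, 0 ≤ P k ∧
      OpNormLE ν (F.proj (τ k) (τ (k + 1))) (conjExp q) 2 (P k))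
    (hb₁ : ∀ k ≤ N, 0 ≤ b₁ k ∧
      ∀ t ∈ Set.Icc (τ k) (τ (k + 1)), ‖m₁ t‖ ≤ b₁ k)
    (hb₂ : ∀ k ≤ N, 0 ≤ b₂ k ∧
      ∀ t ∈ Set.Icc (τ k) (τ (k + 1)), ‖m₂ t‖ ≤ b₂ k) :
    OpNormLE ν ((F.proj (τ 0) (τ (N + 1))).comp (F.fc m₁)) (conjExp q) 2
      (Real.sqrt (∑ k ∈ Finset.range (N + 1), b₁ k ^ 2 * P k ^ 2)) ∧
    OpNormLE ν ((F.proj (τ 0) (τ (N + 1))).comp (F.fc m₂)) (conjExp q) 2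
      (Real.sqrt (∑ k ∈ Finset.range (N + 1), b₂ k ^ 2 * P k ^ 2)) ∧
    OpNormLE ν ((F.proj (τ 0) (τ (N + 1))).comp (F.fc fun t => m₁ t * m₂ t))
      (conjExp q) q
      (Real.sqrt (∑ k ∈ Finset.range (N + 1), b₁ k ^ 2 * P k ^ 2) *
        Real.sqrt (∑ k ∈ Finset.range (N + 1), b₂ k ^ 2 * P k ^ 2)) := by
  classical
  have key₁ := key1 F (conjExp q) m₁ N τ hτ P b₁ hP hb₁
  have key₂ := key1 F (conjExp q) m₂ N τ hτ P b₂ hP hb₂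
  refine ⟨key₁, key₂, ?_⟩
  set C₁ := Real.sqrt (∑ k ∈ Finset.range (N + 1), b₁ k ^ 2 * P k ^ 2) with hC₁
  set C₂ := Real.sqrt (∑ k ∈ Finset.range (N + 1), b₂ k ^ 2 * P k ^ 2) with hC₂
  have hC₁nn : 0 ≤ C₁ := Real.sqrt_nonneg _
  have key₁c := key1 F (conjExp q) (fun t => (starRingEnd ℂ) (m₁ t)) N τ hτ P b₁ hP
    (fun k hk => ⟨(hb₁ k hk).1, fun t ht => by
      rw [RCLike.norm_conj]; exact (hb₁ k hk).2 t ht⟩)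
  have hfcJ : ∀ m : ℝ → ℂ, (F.proj (τ 0) (τ (N + 1))).comp (F.fc m)
      = F.fc (fun t => Set.indicator (Set.Icc (τ 0) (τ (N + 1))) (fun _ => (1 : ℂ)) t * m t) :=
    fun m => (F.fc_mul _ m).symm
  set T₁ := (F.proj (τ 0) (τ (N + 1))).comp (F.fc m₁) with hT₁
  set T₂ := (F.proj (τ 0) (τ (N + 1))).comp (F.fc m₂) with hT₂
  have hsplit : (F.proj (τ 0) (τ (N + 1))).comp (F.fc fun t => m₁ t * m₂ t) = T₁.comp T₂ := by
    rw [hT₁, hT₂, hfcJ m₁, hfcJ m₂, hfcJ, ← F.fc_mul]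
    congr 1
    funext t
    by_cases ht : t ∈ Set.Icc (τ 0) (τ (N + 1))
    · simp only [Set.indicator_of_mem ht]
      ring
    · simp only [Set.indicator_of_notMem ht]
      ring
  have hadj : ContinuousLinearMap.adjoint T₁
      = (F.proj (τ 0) (τ (N + 1))).comp (F.fc fun t => (starRingEnd ℂ) (m₁ t)) := by
    rw [hT₁, hfcJ m₁, hfcJ, ← F.fc_star]
    congr 1
    funext t
    by_cases ht : t ∈ Set.Icc (τ 0) (τ (N + 1))
    · simp only [Set.indicator_of_mem ht, one_mul]
    · simp only [Set.indicator_of_notMem ht, zero_mul, map_zero]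
  intro f
  set u : Lp ℂ 2 ν := T₂ f with hu
  have happ : ((F.proj (τ 0) (τ (N + 1))).comp (F.fc fun t => m₁ t * m₂ t)) f = T₁ u := by
    rw [hsplit]; rfl
  rw [happ]
  have hbound : eLpNorm (⇑(T₁ u)) (ENNReal.ofReal q) ν
      ≤ (ENNReal.ofReal C₁ * ENNReal.ofReal ‖u‖) := by
    refine dual_bound hq (T₁ u) _ (fun g => ?_)
    have h1 : (inner ℂ (ContinuousLinearMap.adjoint T₁ g) u : ℂ) = inner ℂ g (T₁ u) :=
      ContinuousLinearMap.adjoint_inner_left T₁ u g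
    have h2 : ENNReal.ofReal ‖(ContinuousLinearMap.adjoint T₁) g‖
        ≤ ENNReal.ofReal C₁ * eLpNorm (⇑g) (ENNReal.ofReal (conjExp q)) ν := by
      rw [← elpTwo ((ContinuousLinearMap.adjoint T₁) g)]
      have := key₁c g
      rw [← hadj] at this
      exact this
    calc ENNReal.ofReal ‖(inner ℂ g (T₁ u) : ℂ)‖
        = ENNReal.ofReal ‖(inner ℂ (ContinuousLinearMap.adjoint T₁ g) u : ℂ)‖ := by rw [h1]
      _ ≤ ENNReal.ofReal (‖(ContinuousLinearMap.adjoint T₁) g‖ * ‖u‖) :=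
          ENNReal.ofReal_le_ofReal (norm_inner_le_norm _ _)
      _ = ENNReal.ofReal ‖(ContinuousLinearMap.adjoint T₁) g‖ * ENNReal.ofReal ‖u‖ :=
          ENNReal.ofReal_mul (norm_nonneg _)
      _ ≤ (ENNReal.ofReal C₁ * eLpNorm (⇑g) (ENNReal.ofReal (conjExp q)) ν) * ENNReal.ofReal ‖u‖ :=
          mul_le_mul_left h2 _
      _ = (ENNReal.ofReal C₁ * ENNReal.ofReal ‖u‖) * eLpNorm (⇑g) (ENNReal.ofReal (conjExp q)) ν := by
          ring
  have hu_bound : ENNReal.ofReal ‖u‖ ≤ ENNReal.ofReal C₂ * eLpNorm (⇑f) (ENNReal.ofReal (conjExp q)) ν := by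
    rw [← elpTwo u]
    exact key₂ f
  calc eLpNorm (⇑(T₁ u)) (ENNReal.ofReal q) ν
      ≤ ENNReal.ofReal C₁ * ENNReal.ofReal ‖u‖ := hbound
    _ ≤ ENNReal.ofReal C₁ * (ENNReal.ofReal C₂ * eLpNorm (⇑f) (ENNReal.ofReal (conjExp q)) ν) :=
        mul_le_mul_right hu_bound _
    _ = ENNReal.ofReal (C₁ * C₂) * eLpNorm (⇑f) (ENNReal.ofReal (conjExp q)) ν := by
        rw [ENNReal.ofReal_mul hC₁nn, mul_assoc]

end
end

section
/- In the abstract setting (X a σ-finite measure space, A self-adjoint on L²(X), 2<q<∞ fixed, resolvents consistently extended to L^{q′}(X)→L²(X) and L^{q′}(X)→L^q(X)): there is an absolute constant C such that for all 0<ε≤λ, ‖Π_{[λ,λ+ε]}‖_{L^{q′}→L²} ≤ C ελ ‖Π_{[0,2λ]} Im((A²−(λ+iε)²)^{-1})‖_{L^{q′}→L²} and ‖Π_{[λ,λ+ε]}‖²_{L^{q′}→L²} ≤ C ελ ‖Π_{[0,2λ]} Im((A²−(λ+iε)²)^{-1})‖_{L^{q′}→L^q}. -/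
open MeasureTheory Complex Set

noncomputable section

variable {X : Type*} [MeasurableSpace X]

open ContinuousLinearMap

local notation "⟪" x ", " y "⟫" => @inner ℂ _ _ x y

lemma fc_congr {X : Type*} [MeasurableSpace X] {μ : Measure X} (F : BorelFC μ)
    {m₁ m₂ : ℝ → ℂ} (h : ∀ t, m₁ t = m₂ t) : F.fc m₁ = F.fc m₂ := by
  rw [funext h]

lemma fc_sub {X : Type*} [MeasurableSpace X] {μ : Measure X} (F : BorelFC μ)
    (m₁ m₂ : ℝ → ℂ) :
    F.fc (fun t => m₁ t - m₂ t) = F.fc m₁ - F.fc m₂ := by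
  have h1 : F.fc (fun t => m₁ t - m₂ t) = F.fc m₁ + F.fc (fun t => (-1 : ℂ) * m₂ t) := by
    rw [← F.fc_add]
    exact fc_congr F fun t => by ring
  rw [h1, F.fc_smul, neg_one_smul, ← sub_eq_add_neg]

lemma eLpNorm_two_eq {X : Type*} [MeasurableSpace X] {μ : Measure X} (u : Lp ℂ 2 μ) :
    eLpNorm (⇑u) (ENNReal.ofReal 2) μ = ENNReal.ofReal ‖u‖ := by
  have h2 : ENNReal.ofReal (2 : ℝ) = (2 : ENNReal) := by
    norm_num
  rw [h2, MeasureTheory.Lp.norm_def,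
    ENNReal.ofReal_toReal (MeasureTheory.Lp.eLpNorm_ne_top u)]

lemma fc_inner_nonneg {X : Type*} [MeasurableSpace X] {μ : Measure X} (F : BorelFC μ)
    (m : ℝ → ℝ) (hm : ∀ t, 0 ≤ m t) (f : Lp ℂ 2 μ) :
    0 ≤ (⟪f, (F.fc fun t => ((m t : ℝ) : ℂ)) f⟫).re := by
  have hfc : (F.fc fun t => ((m t : ℝ) : ℂ)) =
      (F.fc fun t => ((Real.sqrt (m t) : ℝ) : ℂ)).comp
        (F.fc fun t => ((Real.sqrt (m t) : ℝ) : ℂ)) := by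
    rw [← F.fc_mul]
    exact fc_congr F fun t => by
      rw [← Complex.ofReal_mul, Real.mul_self_sqrt (hm t)]
  have hsa : ContinuousLinearMap.adjoint (F.fc fun t => ((Real.sqrt (m t) : ℝ) : ℂ)) =
      F.fc fun t => ((Real.sqrt (m t) : ℝ) : ℂ) := by
    refine ((F.fc_star _).symm.trans (fc_congr F fun t => ?_))
    exact Complex.conj_ofReal _
  rw [hfc, ContinuousLinearMap.comp_apply]
  nth_rewrite 1 [← hsa]
  rw [ContinuousLinearMap.adjoint_inner_right
      (F.fc fun t => ((Real.sqrt (m t) : ℝ) : ℂ)) f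
      ((F.fc fun t => ((Real.sqrt (m t) : ℝ) : ℂ)) f)]
  rw [← RCLike.re_to_complex]
  exact inner_self_nonneg


/-- **Resolvent bounds imply spectral cluster bounds** ((3.4) and (3.6) of the paper).
There is an absolute constant `C` such that, in any abstract setting — `Y` a σ-finite
measure space, `A` self-adjoint on `L²(Y)` with Borel functional calculus `F`,
`2 < q < ∞`, resolvents consistently extended `L^{q′} → L²` and `L^{q′} → L^q` — and
for all `0 < ε ≤ λ`:
`‖Π_{[λ,λ+ε]}‖_{L^{q′}→L²} ≤ Cελ‖Π_{[0,2λ]} Im((A²−(λ+iε)²)⁻¹)‖_{L^{q′}→L²}` and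
`‖Π_{[λ,λ+ε]}‖²_{L^{q′}→L²} ≤ Cελ‖Π_{[0,2λ]} Im((A²−(λ+iε)²)⁻¹)‖_{L^{q′}→L^q}`
(the right-hand norms being expressed through arbitrary admissible bounds `D`). -/
theorem resolvent_to_cluster_abstract :
    ∃ C : ℝ, 0 < C ∧
      ∀ (Y : Type) [MeasurableSpace Y] (ν : Measure Y) [SigmaFinite ν]
        (F : BorelFC ν) (q : ℝ), 2 < q → ResolventExtends F q →
        ∀ ε lam : ℝ, 0 < ε → ε ≤ lam →
          (∀ D : ℝ, 0 ≤ D →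
            OpNormLE ν ((F.proj 0 (2 * lam)).comp
                (imOp (F.res2 (((lam : ℂ) + (ε : ℂ) * Complex.I) ^ 2))))
              (conjExp q) 2 D →
            OpNormLE ν (F.proj lam (lam + ε)) (conjExp q) 2 (C * ε * lam * D)) ∧
          (∀ D : ℝ, 0 ≤ D →
            OpNormLE ν ((F.proj 0 (2 * lam)).comp
                (imOp (F.res2 (((lam : ℂ) + (ε : ℂ) * Complex.I) ^ 2))))
              (conjExp q) q D →
            OpNormLE ν (F.proj lam (lam + ε)) (conjExp q) 2
              (Real.sqrt (C * ε * lam * D))) := by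
  refine ⟨10, by norm_num, ?_⟩
  intro Y _ ν _ F q hqgt _hres ε lam hε hεlam
  have hlam : 0 < lam := lt_of_lt_of_le hε hεlam
  have hq1 : 1 < q := by linarith
  have hqq' : Real.HolderConjugate (conjExp q) q :=
    (Real.HolderConjugate.conjExponent hq1).symm
  set gIm : ℝ → ℝ := fun t =>
    (2 * ε * lam) / ((t ^ 2 - lam ^ 2 + ε ^ 2) ^ 2 + (2 * ε * lam) ^ 2) with hgdef
  have hgpos : ∀ t, 0 < gIm t := fun t => div_pos (by positivity) (by positivity)
  set gR : ℝ → ℝ := fun t => Set.indicator (Set.Icc 0 (2 * lam)) gIm t with hgRdef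
  have hgRnonneg : ∀ t, 0 ≤ gR t := fun t =>
    Set.indicator_nonneg (fun s _ => (hgpos s).le) t
  set gC : ℝ → ℂ := fun t => ((gR t : ℝ) : ℂ) with hgCdef
  -- pointwise computation of the imaginary part of the resolvent of `A²`
  have him : ∀ t : ℝ,
      ((((t : ℂ)) ^ 2 - ((lam : ℂ) + (ε : ℂ) * Complex.I) ^ 2)⁻¹).im = gIm t := by
    intro t
    have hw : ((t : ℂ)) ^ 2 - ((lam : ℂ) + (ε : ℂ) * Complex.I) ^ 2 =
        Complex.ofReal (t ^ 2 - lam ^ 2 + ε ^ 2) - Complex.ofReal (2 * ε * lam) * Complex.I := by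
      apply Complex.ext <;>
        simp [pow_two, Complex.sub_re, Complex.sub_im, Complex.add_re, Complex.add_im,
          Complex.mul_re, Complex.mul_im] <;> ring
    rw [hw, Complex.inv_im, Complex.normSq_apply]
    simp only [hgdef, Complex.sub_re, Complex.sub_im, Complex.mul_re, Complex.mul_im,
      Complex.ofReal_re, Complex.ofReal_im, Complex.I_re, Complex.I_im]
    ring
  -- identification of the operator `Π_{[0,2λ]} Im (A²-(λ+iε)²)⁻¹` with `gC(A)`
  have h1 : imOp (F.res2 (((lam : ℂ) + (ε : ℂ) * Complex.I) ^ 2)) =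
      F.fc fun t => ((gIm t : ℝ) : ℂ) := by
    have e1 : F.fc (fun t =>
        (2 * Complex.I)⁻¹ * ((((t : ℂ)) ^ 2 - ((lam : ℂ) + (ε : ℂ) * Complex.I) ^ 2)⁻¹ -
          (starRingEnd ℂ) ((((t : ℂ)) ^ 2 - ((lam : ℂ) + (ε : ℂ) * Complex.I) ^ 2)⁻¹))) =
        imOp (F.res2 (((lam : ℂ) + (ε : ℂ) * Complex.I) ^ 2)) := by
      rw [F.fc_smul, fc_sub, F.fc_star]
      rfl
    rw [← e1]
    refine fc_congr F fun t => ?_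
    rw [Complex.sub_conj, him t]
    rw [Complex.ofReal_mul]
    field_simp
    push_cast
    ring
  have hT : (F.proj 0 (2 * lam)).comp
      (imOp (F.res2 (((lam : ℂ) + (ε : ℂ) * Complex.I) ^ 2))) = F.fc gC := by
    rw [h1]
    have e2 : F.fc (fun t =>
        Set.indicator (Set.Icc (0:ℝ) (2 * lam)) (fun _ => (1:ℂ)) t * ((gIm t : ℝ) : ℂ)) =
        (F.proj 0 (2 * lam)).comp (F.fc fun t => ((gIm t : ℝ) : ℂ)) := F.fc_mul _ _
    rw [← e2]
    refine fc_congr F fun t => ?_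
    by_cases ht : t ∈ Set.Icc (0:ℝ) (2 * lam)
    · simp [hgCdef, hgRdef, Set.indicator_of_mem ht]
    · simp [hgCdef, hgRdef, Set.indicator_of_notMem ht]
  -- numerical lower bound for `gIm` on `[λ, λ+ε]`
  have hglow : ∀ t ∈ Set.Icc lam (lam + ε), 1 ≤ 10 * ε * lam * gIm t := by
    rintro t ⟨ht1, ht2⟩
    have h3 : 0 ≤ t ^ 2 - lam ^ 2 + ε ^ 2 := by nlinarith
    have h4 : t ^ 2 - lam ^ 2 + ε ^ 2 ≤ 4 * ε * lam := by nlinarith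
    have hden : (t ^ 2 - lam ^ 2 + ε ^ 2) ^ 2 + (2 * ε * lam) ^ 2 ≤ 20 * ε ^ 2 * lam ^ 2 := by
      nlinarith
    have hdpos : 0 < (t ^ 2 - lam ^ 2 + ε ^ 2) ^ 2 + (2 * ε * lam) ^ 2 := by positivity
    have hg' : 10 * ε * lam * gIm t =
        (20 * ε ^ 2 * lam ^ 2) / ((t ^ 2 - lam ^ 2 + ε ^ 2) ^ 2 + (2 * ε * lam) ^ 2) := by
      simp only [hgdef]
      field_simp
      ring
    rw [hg', le_div_iff₀ hdpos, one_mul]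
    exact hden
  -- factorization `Π_{[λ,λ+ε]} = h(A) ∘ g(A)` with `‖h(A)‖ ≤ 10ελ`
  set hC : ℝ → ℂ := fun t =>
    ((Set.indicator (Set.Icc lam (lam + ε)) (fun s => (gIm s)⁻¹) t : ℝ) : ℂ) with hhCdef
  have hfactor : F.proj lam (lam + ε) = (F.fc hC).comp (F.fc gC) := by
    rw [← F.fc_mul]
    refine fc_congr F fun t => ?_
    by_cases ht : t ∈ Set.Icc lam (lam + ε)
    · have ht2 : t ∈ Set.Icc (0:ℝ) (2 * lam) := by
        obtain ⟨ha, hb⟩ := ht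
        exact ⟨by linarith, by linarith⟩
      rw [Set.indicator_of_mem ht]
      simp only [hhCdef, hgCdef, hgRdef, Set.indicator_of_mem ht, Set.indicator_of_mem ht2]
      rw [← Complex.ofReal_mul, inv_mul_cancel₀ (hgpos t).ne', Complex.ofReal_one]
    · rw [Set.indicator_of_notMem ht]
      simp only [hhCdef, Set.indicator_of_notMem ht, Complex.ofReal_zero, zero_mul]
  have hCnorm : ‖F.fc hC‖ ≤ 10 * ε * lam := by
    refine F.fc_norm_le _ _ fun t => ?_
    simp only [hhCdef, Complex.norm_real]
    by_cases ht : t ∈ Set.Icc lam (lam + ε)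
    · rw [Set.indicator_of_mem ht, Real.norm_eq_abs,
        _root_.abs_of_nonneg (inv_nonneg.mpr (hgpos t).le),
        inv_eq_one_div, div_le_iff₀ (hgpos t)]
      exact hglow t ht
    · rw [Set.indicator_of_notMem ht, norm_zero]
      positivity
  -- projection algebra
  have hproj2 : (F.proj lam (lam + ε)).comp (F.proj lam (lam + ε)) = F.proj lam (lam + ε) := by
    refine ((F.fc_mul _ _).symm.trans (fc_congr F fun t => ?_))
    by_cases ht : t ∈ Set.Icc lam (lam + ε) <;> simp [ht]
  have hprojsa : ContinuousLinearMap.adjoint (F.proj lam (lam + ε)) = F.proj lam (lam + ε) := by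
    refine ((F.fc_star _).symm.trans (fc_congr F fun t => ?_))
    by_cases ht : t ∈ Set.Icc lam (lam + ε) <;> simp [ht]
  constructor
  · -- first inequality
    intro D hD hOp f
    rw [hT] at hOp
    have hPf : (F.proj lam (lam + ε)) f = (F.fc hC) ((F.fc gC) f) := by
      rw [hfactor]; rfl
    rw [hPf, eLpNorm_two_eq]
    calc ENNReal.ofReal ‖(F.fc hC) ((F.fc gC) f)‖
        ≤ ENNReal.ofReal ((10 * ε * lam) * ‖(F.fc gC) f‖) := by
          apply ENNReal.ofReal_le_ofReal
          exact ((F.fc hC).le_opNorm _).trans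
            (mul_le_mul_of_nonneg_right hCnorm (norm_nonneg _))
      _ = ENNReal.ofReal (10 * ε * lam) * ENNReal.ofReal ‖(F.fc gC) f‖ :=
          ENNReal.ofReal_mul (by positivity)
      _ ≤ ENNReal.ofReal (10 * ε * lam) *
            (ENNReal.ofReal D * eLpNorm (⇑f) (ENNReal.ofReal (conjExp q)) ν) := by
          gcongr
          rw [← eLpNorm_two_eq]
          exact hOp f
      _ ≤ ENNReal.ofReal (10 * ε * lam * D) * eLpNorm (⇑f) (ENNReal.ofReal (conjExp q)) ν := by
          rw [← mul_assoc, ← ENNReal.ofReal_mul (by positivity)]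
  · -- second inequality
    intro D hD hOp f
    rw [hT] at hOp
    -- quadratic-form monotonicity
    set sR : ℝ → ℝ := Set.indicator (Set.Icc lam (lam + ε)) (fun _ => (1:ℝ)) with hsRdef
    have hmpos : ∀ t, 0 ≤ 10 * ε * lam * gR t - sR t := by
      intro t
      by_cases ht : t ∈ Set.Icc lam (lam + ε)
      · have ht2 : t ∈ Set.Icc (0:ℝ) (2 * lam) := by
          obtain ⟨ha, hb⟩ := ht
          exact ⟨by linarith, by linarith⟩
        simp only [hsRdef, hgRdef, Set.indicator_of_mem ht, Set.indicator_of_mem ht2]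
        have := hglow t ht
        linarith
      · simp only [hsRdef, Set.indicator_of_notMem ht]
        have := mul_nonneg (by positivity : (0:ℝ) ≤ 10 * ε * lam) (hgRnonneg t)
        linarith
    have hsplit : (F.fc fun t => ((10 * ε * lam * gR t - sR t : ℝ) : ℂ)) =
        ((10 * ε * lam : ℝ) : ℂ) • F.fc gC - F.proj lam (lam + ε) := by
      have e3 : (F.fc fun t => ((10 * ε * lam * gR t - sR t : ℝ) : ℂ)) =
          F.fc (fun t => ((10 * ε * lam : ℝ) : ℂ) * gC t) -
            F.fc (fun t => Set.indicator (Set.Icc lam (lam + ε)) (fun _ => (1:ℂ)) t) := by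
        rw [← fc_sub]
        refine fc_congr F fun t => ?_
        by_cases ht : t ∈ Set.Icc lam (lam + ε)
        · simp only [hsRdef, hgCdef, Set.indicator_of_mem ht]
          push_cast
          ring
        · simp only [hsRdef, hgCdef, Set.indicator_of_notMem ht]
          push_cast
          ring
      rw [e3, F.fc_smul]
      rfl
    have hmono : (⟪f, (F.proj lam (lam + ε)) f⟫).re ≤
        (10 * ε * lam) * (⟪f, (F.fc gC) f⟫).re := by
      have hnn := fc_inner_nonneg F _ hmpos f
      rw [hsplit] at hnn
      simp only [ContinuousLinearMap.sub_apply, ContinuousLinearMap.smul_apply,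
        inner_sub_right, inner_smul_right, Complex.sub_re, Complex.mul_re,
        Complex.ofReal_re, Complex.ofReal_im, zero_mul, sub_zero] at hnn
      linarith
    -- `‖Πf‖² = re ⟪f, Πf⟫`
    have hnorm2 : ‖(F.proj lam (lam + ε)) f‖ ^ 2 = (⟪f, (F.proj lam (lam + ε)) f⟫).re := by
      have hidem : (F.proj lam (lam + ε)) ((F.proj lam (lam + ε)) f) =
          (F.proj lam (lam + ε)) f := by
        rw [← ContinuousLinearMap.comp_apply, hproj2]
      have h5 := ContinuousLinearMap.adjoint_inner_left (F.proj lam (lam + ε)) f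
        ((F.proj lam (lam + ε)) f)
      rw [hprojsa, hidem] at h5
      rw [← RCLike.re_to_complex, inner_re_symm, h5]
      exact (inner_self_eq_norm_sq _).symm
    -- Hölder
    set u : Lp ℂ 2 ν := (F.fc gC) f with hu
    have hholder : ENNReal.ofReal ((⟪f, u⟫).re) ≤
        eLpNorm (⇑f) (ENNReal.ofReal (conjExp q)) ν * eLpNorm (⇑u) (ENNReal.ofReal q) ν := by
      have hint := MeasureTheory.L2.integrable_inner (𝕜 := ℂ) f u
      have hre : (⟪f, u⟫).re ≤ ∫ a, ‖(inner ℂ (f a) (u a) : ℂ)‖ ∂ν := by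
        rw [MeasureTheory.L2.inner_def]
        exact (Complex.re_le_norm _).trans (norm_integral_le_integral_norm _)
      have h2 := ofReal_integral_norm_eq_lintegral_enorm hint
      have h3 : ∫⁻ a, (‖(inner ℂ (f a) (u a) : ℂ)‖₊ : ENNReal) ∂ν ≤
          ∫⁻ a, (‖f a‖₊ : ENNReal) * (‖u a‖₊ : ENNReal) ∂ν := by
        refine lintegral_mono fun a => ?_
        rw [← ENNReal.coe_mul]
        exact ENNReal.coe_le_coe.mpr (nnnorm_inner_le_nnnorm (𝕜 := ℂ) _ _)
      have h4 : ∫⁻ a, (‖f a‖₊ : ENNReal) * (‖u a‖₊ : ENNReal) ∂ν ≤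
          eLpNorm (⇑f) (ENNReal.ofReal (conjExp q)) ν * eLpNorm (⇑u) (ENNReal.ofReal q) ν := by
        have hH := ENNReal.lintegral_mul_le_Lp_mul_Lq ν hqq'
          (MeasureTheory.Lp.aestronglyMeasurable f).enorm
          (MeasureTheory.Lp.aestronglyMeasurable u).enorm
        rw [eLpNorm_eq_lintegral_rpow_enorm_toReal (by simp [ENNReal.ofReal_eq_zero]; linarith [hqq'.pos] : ENNReal.ofReal (conjExp q) ≠ 0) ENNReal.ofReal_ne_top,
          eLpNorm_eq_lintegral_rpow_enorm_toReal (by simp [ENNReal.ofReal_eq_zero]; linarith [hqq'.symm.pos] : ENNReal.ofReal q ≠ 0) ENNReal.ofReal_ne_top,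
          ENNReal.toReal_ofReal hqq'.nonneg, ENNReal.toReal_ofReal hqq'.symm.nonneg]
        exact hH
      calc ENNReal.ofReal ((⟪f, u⟫).re)
          ≤ ENNReal.ofReal (∫ a, ‖(inner ℂ (f a) (u a) : ℂ)‖ ∂ν) := ENNReal.ofReal_le_ofReal hre
        _ = ∫⁻ a, (‖(inner ℂ (f a) (u a) : ℂ)‖₊ : ENNReal) ∂ν := h2
        _ ≤ _ := h3.trans h4
    have hON : eLpNorm (⇑u) (ENNReal.ofReal q) ν ≤
        ENNReal.ofReal D * eLpNorm (⇑f) (ENNReal.ofReal (conjExp q)) ν := hOp f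
    -- combine
    set Nf := eLpNorm (⇑f) (ENNReal.ofReal (conjExp q)) ν with hNf
    have hsq : (ENNReal.ofReal ‖(F.proj lam (lam + ε)) f‖) ^ 2 ≤
        (ENNReal.ofReal (Real.sqrt (10 * ε * lam * D)) * Nf) ^ 2 := by
      rw [← ENNReal.ofReal_pow (norm_nonneg _), hnorm2]
      calc ENNReal.ofReal ((⟪f, (F.proj lam (lam + ε)) f⟫).re)
          ≤ ENNReal.ofReal ((10 * ε * lam) * (⟪f, u⟫).re) := ENNReal.ofReal_le_ofReal hmono
        _ = ENNReal.ofReal (10 * ε * lam) * ENNReal.ofReal ((⟪f, u⟫).re) :=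
            ENNReal.ofReal_mul (by positivity)
        _ ≤ ENNReal.ofReal (10 * ε * lam) * (Nf * (ENNReal.ofReal D * Nf)) := by
            exact mul_le_mul_right (hholder.trans (mul_le_mul_right hON _)) _
        _ = (ENNReal.ofReal (Real.sqrt (10 * ε * lam * D)) * Nf) ^ 2 := by
            rw [mul_pow, ← ENNReal.ofReal_pow (Real.sqrt_nonneg _),
              Real.sq_sqrt (by positivity : (0:ℝ) ≤ 10 * ε * lam * D),
              ENNReal.ofReal_mul (by positivity : (0:ℝ) ≤ 10 * ε * lam)]
            ring
    have hfinal : ENNReal.ofReal ‖(F.proj lam (lam + ε)) f‖ ≤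
        ENNReal.ofReal (Real.sqrt (10 * ε * lam * D)) * Nf := by
      by_contra hc
      push_neg at hc
      exact absurd hsq (not_le.mpr (ENNReal.pow_lt_pow_left two_ne_zero hc))
    rw [eLpNorm_two_eq]
    exact hfinal


end
end
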